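/- arXiv:1908.07684 — 5 statements merged into one kernel-verified Lean document; each statement's English description precedes it below -/
import Mathlib

section
/- Let R_P be an m×m real symmetric positive semidefinite matrix and Z an n×n real symmetric positive semidefinite matrix, and let B, D be n×m real matrices. If Ker(R_P) ⊆ Ker(B) ∩ Ker(D), then for any n×n matrices C and any n×m matrix L_P with Ker(R_P) ⊆ Ker(L_P'), the matrix (B'Z + D'Z C + L_P')' multiplied by (I - (R_P + D'Z D)(R_P + D'Z D)†) equals zero. -/
open Matrix

/-- Factorization of linear maps through kernels over a field. -/
lemma exists_comp_of_ker_le_ker {K V W U : Type*} [Field K] [AddCommGroup V] [Module K V]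
    [AddCommGroup W] [Module K W] [AddCommGroup U] [Module K U]
    (f : V →ₗ[K] W) (g : V →ₗ[K] U) (h : LinearMap.ker f ≤ LinearMap.ker g) :
    ∃ p : W →ₗ[K] U, g = p ∘ₗ f := by
  let g' : V ⧸ LinearMap.ker f →ₗ[K] U := (LinearMap.ker f).liftQ g h
  let e := f.quotKerEquivRange
  let h₀ : LinearMap.range f →ₗ[K] U := g' ∘ₗ (e.symm : LinearMap.range f →ₗ[K] _)
  obtain ⟨p, hp⟩ := LinearMap.exists_extend h₀
  refine ⟨p, ?_⟩
  ext v
  have hp' : p (f v) = h₀ ⟨f v, LinearMap.mem_range_self f v⟩ :=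
    LinearMap.congr_fun hp ⟨f v, LinearMap.mem_range_self f v⟩
  have he : e.symm ⟨f v, LinearMap.mem_range_self f v⟩ = Submodule.Quotient.mk v :=
    f.quotKerEquivRange_symm_apply_image v (LinearMap.mem_range_self f v)
  show g v = p (f v)
  rw [hp']
  show g v = g' (e.symm ⟨f v, LinearMap.mem_range_self f v⟩)
  rw [he]
  simp [g']

/-- Matrix factorization: if `Ker M ⊆ Ker B` then `B = F * M` for some `F`. -/
lemma exists_factor {k l j : ℕ} (M : Matrix (Fin k) (Fin l) ℝ) (B : Matrix (Fin j) (Fin l) ℝ)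
    (h : ∀ v : Fin l → ℝ, M.mulVec v = 0 → B.mulVec v = 0) :
    ∃ F : Matrix (Fin j) (Fin k) ℝ, B = F * M := by
  have hk : LinearMap.ker (Matrix.toLin' M) ≤ LinearMap.ker (Matrix.toLin' B) := by
    intro v hv
    simp only [LinearMap.mem_ker, Matrix.toLin'_apply] at *
    exact h v hv
  obtain ⟨p, hp⟩ := exists_comp_of_ker_le_ker (Matrix.toLin' M) (Matrix.toLin' B) hk
  refine ⟨LinearMap.toMatrix' p, ?_⟩
  have := congrArg LinearMap.toMatrix' hp
  rwa [LinearMap.toMatrix'_toLin', LinearMap.toMatrix'_comp, LinearMap.toMatrix'_toLin'] at this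

/-- `B` is the Moore–Penrose pseudoinverse of `A`. -/
def IsMoorePenrose {k l : ℕ} (A : Matrix (Fin k) (Fin l) ℝ)
    (B : Matrix (Fin l) (Fin k) ℝ) : Prop :=
  A * B * A = A ∧ B * A * B = B ∧ (A * B)ᵀ = A * B ∧ (B * A)ᵀ = B * A

theorem stmt2 {n m : ℕ} (RP : Matrix (Fin m) (Fin m) ℝ) (Z : Matrix (Fin n) (Fin n) ℝ)
    (B D : Matrix (Fin n) (Fin m) ℝ) (C : Matrix (Fin n) (Fin n) ℝ)
    (LP : Matrix (Fin n) (Fin m) ℝ)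
    (hRP : RP.PosSemidef) (hZ : Z.PosSemidef)
    (hkerB : ∀ v : Fin m → ℝ, RP.mulVec v = 0 → B.mulVec v = 0)
    (hkerD : ∀ v : Fin m → ℝ, RP.mulVec v = 0 → D.mulVec v = 0)
    (hkerL : ∀ v : Fin m → ℝ, RP.mulVec v = 0 → LP.mulVec v = 0)
    (W : Matrix (Fin m) (Fin m) ℝ)
    (hW : IsMoorePenrose (RP + Dᵀ * Z * D) W) :
    (Bᵀ * Z + Dᵀ * Z * C + LPᵀ)ᵀ * (1 - (RP + Dᵀ * Z * D) * W) = 0 := by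
  set M := RP + Dᵀ * Z * D with hM
  have hRPt : RPᵀ = RP := Matrix.IsSymm.eq (by simpa using hRP.1)
  have hZt : Zᵀ = Z := Matrix.IsSymm.eq (by simpa using hZ.1)
  -- Dᵀ Z D is PSD
  have hM2 : (Dᵀ * Z * D).PosSemidef := by
    have := hZ.mul_mul_conjTranspose_same Dᵀ
    simpa [Matrix.mul_assoc] using this
  -- Ker M ⊆ Ker RP
  have hker : ∀ v : Fin m → ℝ, M.mulVec v = 0 → RP.mulVec v = 0 := by
    intro v hv
    have h1 : 0 ≤ v ⬝ᵥ RP.mulVec v := by simpa using hRP.dotProduct_mulVec_nonneg v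
    have h2 : 0 ≤ v ⬝ᵥ (Dᵀ * Z * D).mulVec v := by simpa using hM2.dotProduct_mulVec_nonneg v
    have hsum : v ⬝ᵥ RP.mulVec v + v ⬝ᵥ (Dᵀ * Z * D).mulVec v = 0 := by
      have : v ⬝ᵥ M.mulVec v = 0 := by rw [hv]; simp
      rwa [hM, Matrix.add_mulVec, dotProduct_add] at this
    have hq : v ⬝ᵥ RP.mulVec v = 0 := le_antisymm (by linarith) h1
    exact (hRP.dotProduct_mulVec_zero_iff v).mp (by simpa using hq)
  -- factorizations
  obtain ⟨F, hF⟩ := exists_factor M B (fun v hv => hkerB v (hker v hv))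
  obtain ⟨G, hG⟩ := exists_factor M D (fun v hv => hkerD v (hker v hv))
  obtain ⟨H, hH⟩ := exists_factor M LP (fun v hv => hkerL v (hker v hv))
  have hMsymm : Mᵀ = M := by
    rw [hM, Matrix.transpose_add, hRPt]
    simp [Matrix.transpose_mul, hZt, Matrix.mul_assoc]
  have hMWM : M * W * M = M := hW.1
  have hMWsymm : (M * W)ᵀ = M * W := hW.2.2.1
  have key : (1 - M * W) * (Bᵀ * Z + Dᵀ * Z * C + LPᵀ) = 0 := by
    have hBt : Bᵀ = M * Fᵀ := by rw [hF, Matrix.transpose_mul, hMsymm]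
    have hDt : Dᵀ = M * Gᵀ := by rw [hG, Matrix.transpose_mul, hMsymm]
    have hLt : LPᵀ = M * Hᵀ := by rw [hH, Matrix.transpose_mul, hMsymm]
    have hfac : Bᵀ * Z + Dᵀ * Z * C + LPᵀ = M * (Fᵀ * Z + Gᵀ * Z * C + Hᵀ) := by
      rw [hBt, hDt, hLt]
      simp [Matrix.mul_add, Matrix.mul_assoc]
    rw [hfac, Matrix.sub_mul, Matrix.one_mul, ← Matrix.mul_assoc, hMWM, sub_self]
  calc (Bᵀ * Z + Dᵀ * Z * C + LPᵀ)ᵀ * (1 - M * W)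
      = ((1 - M * W)ᵀ * (Bᵀ * Z + Dᵀ * Z * C + LPᵀ))ᵀ := by
        rw [Matrix.transpose_mul, Matrix.transpose_transpose]
    _ = ((1 - M * W) * (Bᵀ * Z + Dᵀ * Z * C + LPᵀ))ᵀ := by
        rw [Matrix.transpose_sub, Matrix.transpose_one, hMWsymm]
    _ = 0 := by rw [key, Matrix.transpose_zero]
end

section
/- Let Q, R symmetric, L a matrix, with the block matrix [[Q, L],[L', R]] positive semidefinite, and suppose K satisfies L(I - R R†) = 0. Then the matrix Q + L K + K' L' + K' R K is positive semidefinite; in fact Q + L K + K' L' + K' R K ≥ (L' + R K)' R† (L' + R K) ≥ 0. -/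
open Matrix

lemma mp_unique {k l : ℕ} {A : Matrix (Fin k) (Fin l) ℝ}
    {B C : Matrix (Fin l) (Fin k) ℝ}
    (hB : IsMoorePenrose A B) (hC : IsMoorePenrose A C) : B = C := by
  obtain ⟨hB1, hB2, hB3, hB4⟩ := hB
  obtain ⟨hC1, hC2, hC3, hC4⟩ := hC
  have h1 : B = B * A * C := by
    calc B = B * (A * B) := by rw [← Matrix.mul_assoc, hB2]
    _ = B * (A * B)ᵀ := by rw [hB3]
    _ = B * (A * C * A * B)ᵀ := by rw [hC1]
    _ = B * ((A * B)ᵀ * (A * C)ᵀ) := by rw [← Matrix.transpose_mul, ← Matrix.mul_assoc]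
    _ = B * ((A * B) * (A * C)) := by rw [hB3, hC3]
    _ = (B * (A * B)) * (A * C) := (Matrix.mul_assoc B (A*B) (A*C)).symm
    _ = B * (A * C) := by rw [← Matrix.mul_assoc B A B, hB2]
    _ = B * A * C := (Matrix.mul_assoc _ _ _).symm
  have h2 : C = B * A * C := by
    calc C = C * A * C := hC2.symm
    _ = (C * A)ᵀ * C := by rw [hC4]
    _ = (C * (A * B * A))ᵀ * C := by rw [hB1]
    _ = ((C * A) * (B * A))ᵀ * C := by rw [Matrix.mul_assoc A B A, ← Matrix.mul_assoc]
    _ = ((B * A)ᵀ * (C * A)ᵀ) * C := by rw [Matrix.transpose_mul]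
    _ = (B * A) * ((C * A) * C) := by rw [hB4, hC4, Matrix.mul_assoc]
    _ = B * A * C := by rw [hC2]
  rw [h1, ← h2]

theorem stmt4 {n m : ℕ} (Q : Matrix (Fin n) (Fin n) ℝ) (R : Matrix (Fin m) (Fin m) ℝ)
    (L : Matrix (Fin n) (Fin m) ℝ) (K : Matrix (Fin m) (Fin n) ℝ)
    (Rd : Matrix (Fin m) (Fin m) ℝ)
    (hQ : Q.IsSymm) (hR : R.IsSymm) (hRd : IsMoorePenrose R Rd)
    (hblk : (Matrix.fromBlocks Q L Lᵀ R).PosSemidef)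
    (hreg : L * (1 - R * Rd) = 0) :
    (Q + L * K + Kᵀ * Lᵀ + Kᵀ * R * K).PosSemidef ∧
    (Q + L * K + Kᵀ * Lᵀ + Kᵀ * R * K
      - (Lᵀ + R * K)ᵀ * Rd * (Lᵀ + R * K)).PosSemidef ∧
    ((Lᵀ + R * K)ᵀ * Rd * (Lᵀ + R * K)).PosSemidef := by
  obtain ⟨h1, h2, h3, h4⟩ := hRd
  have hRs : Rᵀ = R := hR
  have tp3 : ∀ (a b c : Matrix (Fin m) (Fin m) ℝ), (a*b*c)ᵀ = cᵀ*bᵀ*aᵀ := fun a b c => by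
    rw [Matrix.transpose_mul, Matrix.transpose_mul, Matrix.mul_assoc]
  have ha : R * Rdᵀ = Rd * R := by
    have := h4; rwa [Matrix.transpose_mul, hRs] at this
  have hb : Rdᵀ * R = R * Rd := by
    have := h3; rwa [Matrix.transpose_mul, hRs] at this
  have hRdT : IsMoorePenrose R Rdᵀ := by
    refine ⟨?_, ?_, ?_, ?_⟩
    · calc R * Rdᵀ * R = (Rᵀ * Rd * Rᵀ)ᵀ := by rw [tp3]; simp
      _ = R := by rw [hRs, h1, hRs]
    · calc Rdᵀ * R * Rdᵀ = (Rd * Rᵀ * Rd)ᵀ := by rw [tp3]; simp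
      _ = Rdᵀ := by rw [hRs, h2]
    · rw [ha]; exact h4
    · rw [hb]; exact h3
  have hsym : Rdᵀ = Rd := mp_unique hRdT ⟨h1, h2, h3, h4⟩
  have hcomm : Rd * R = R * Rd := by have := hb; rwa [hsym] at this
  have hL : L * R * Rd = L := by
    rw [Matrix.mul_sub, Matrix.mul_one, sub_eq_zero] at hreg
    rw [Matrix.mul_assoc, ← hreg]
  have e1 : L * Rd * R = L := by rw [Matrix.mul_assoc, hcomm, ← Matrix.mul_assoc, hL]
  have e2 : R * Rd * Lᵀ = Lᵀ := by
    have := congrArg Matrix.transpose e1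
    rwa [Matrix.transpose_mul, Matrix.transpose_mul, hRs, hsym, ← Matrix.mul_assoc] at this
  have hRpsd : R.PosSemidef := by
    have := hblk.submatrix (Sum.inr : Fin m → Fin n ⊕ Fin m)
    convert this using 2 <;> rfl
  have key : (Lᵀ + R * K)ᵀ * Rd * (Lᵀ + R * K)
      = L * Rd * Lᵀ + L * K + Kᵀ * Lᵀ + Kᵀ * R * K := by
    have ht : (Lᵀ + R * K)ᵀ = L + Kᵀ * R := by
      rw [Matrix.transpose_add, Matrix.transpose_transpose, Matrix.transpose_mul, hRs]
    have t1 : L * Rd * (R * K) = L * K := by rw [← Matrix.mul_assoc, e1]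
    have t2 : Kᵀ * R * Rd * Lᵀ = Kᵀ * Lᵀ := by
      rw [Matrix.mul_assoc Kᵀ R Rd, Matrix.mul_assoc Kᵀ (R*Rd) Lᵀ, e2]
    have t3 : Kᵀ * R * Rd * (R * K) = Kᵀ * R * K := by
      rw [← Matrix.mul_assoc, Matrix.mul_assoc Kᵀ R Rd, Matrix.mul_assoc Kᵀ (R*Rd) R, h1]
    rw [ht, Matrix.add_mul, Matrix.add_mul, Matrix.mul_add, Matrix.mul_add, t1, t2, t3]
    abel
  have hschur : (Q - L * Rd * Lᵀ).PosSemidef := by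
    have hm := hblk.conjTranspose_mul_mul_same
      (Matrix.fromRows (1 : Matrix (Fin n) (Fin n) ℝ) (-(Rd * Lᵀ)))
    have f1 : Rd * (R * (Rd * Lᵀ)) = Rd * Lᵀ := by
      rw [← Matrix.mul_assoc, ← Matrix.mul_assoc, h2]
    have heq : (Matrix.fromRows (1 : Matrix (Fin n) (Fin n) ℝ) (-(Rd * Lᵀ)))ᴴ
        * Matrix.fromBlocks Q L Lᵀ R
        * Matrix.fromRows (1 : Matrix (Fin n) (Fin n) ℝ) (-(Rd * Lᵀ))
        = Q - L * Rd * Lᵀ := by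
      rw [conjTranspose_fromRows_eq_fromCols_conjTranspose, Matrix.mul_assoc,
        fromBlocks_mul_fromRows, fromCols_mul_fromRows]
      simp only [Matrix.conjTranspose_eq_transpose_of_trivial, Matrix.transpose_neg,
        Matrix.transpose_mul, Matrix.transpose_transpose, Matrix.transpose_one,
        Matrix.one_mul, Matrix.mul_one, Matrix.mul_neg, Matrix.neg_mul, neg_neg,
        Matrix.mul_add, Matrix.add_mul, Matrix.mul_assoc, hsym]
      rw [f1]
      abel
    rw [heq] at hm
    exact hm
  have h3rd : ((Lᵀ + R * K)ᵀ * Rd * (Lᵀ + R * K)).PosSemidef := by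
    set X := Lᵀ + R * K with hX
    have hE2 : (Xᵀ * Rd) * R * (Rd * X) = Xᵀ * Rd * X := by
      rw [Matrix.mul_assoc (Xᵀ * Rd) R (Rd * X), ← Matrix.mul_assoc R Rd X,
        ← Matrix.mul_assoc (Xᵀ*Rd) (R*Rd) X, Matrix.mul_assoc Xᵀ Rd (R * Rd),
        ← Matrix.mul_assoc Rd R Rd, h2]
    have hE : Xᵀ * Rd * X = (Rd * X)ᴴ * R * (Rd * X) := by
      rw [Matrix.conjTranspose_eq_transpose_of_trivial, Matrix.transpose_mul, hsym, hE2]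
    rw [hE]
    exact hRpsd.conjTranspose_mul_mul_same _
  have h2nd : (Q + L * K + Kᵀ * Lᵀ + Kᵀ * R * K
      - (Lᵀ + R * K)ᵀ * Rd * (Lᵀ + R * K)).PosSemidef := by
    have hd : Q + L * K + Kᵀ * Lᵀ + Kᵀ * R * K
        - (Lᵀ + R * K)ᵀ * Rd * (Lᵀ + R * K) = Q - L * Rd * Lᵀ := by
      rw [key]; abel
    rw [hd]; exact hschur
  refine ⟨?_, h2nd, h3rd⟩
  have hs : Q + L * K + Kᵀ * Lᵀ + Kᵀ * R * K
      = (Q + L * K + Kᵀ * Lᵀ + Kᵀ * R * K - (Lᵀ + R * K)ᵀ * Rd * (Lᵀ + R * K))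
        + (Lᵀ + R * K)ᵀ * Rd * (Lᵀ + R * K) := by abel
  rw [hs]
  exact h2nd.add h3rd
end

section
/- Suppose Z is a symmetric positive semidefinite n×n matrix satisfying the Lyapunov-type equation Ā' Z + Z Ā + C̄' Z C̄ + Q̄ = 0 with Q̄ positive semidefinite. Let U be an orthogonal matrix with U' Z U = [[0,0],[0,Z₂]] where Z₂ > 0. Writing U' Ā U = [[A₁₁,A₁₂],[A₂₁,A₂₂]], U' C̄ U = [[C₁₁,C₁₂],[C₂₁,C₂₂]], U' Q̄ U = [[Q₁₁,Q₁₂],[Q₁₂',Q₂₂]] in conforming blocks, then Q₁₁ = 0, Q₁₂ = 0, C₂₁ = 0, A₂₁ = 0, Q₂₂ ≥ 0, and A₂₂' Z₂ + Z₂ A₂₂ + C₂₂' Z₂ C₂₂ + Q₂₂ = 0. -/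
open Matrix

-- aux: psd + psd = 0 implies both zero
lemma psd_add_eq_zero {m : ℕ} {A B : Matrix (Fin m) (Fin m) ℝ}
    (hA : A.PosSemidef) (hB : B.PosSemidef) (h : A + B = 0) : A = 0 := by
  have hmv : ∀ x : Fin m → ℝ, A *ᵥ x = 0 := by
    intro x
    rw [← hA.dotProduct_mulVec_zero_iff x]
    have h1 := hA.dotProduct_mulVec_nonneg x
    have h2 := hB.dotProduct_mulVec_nonneg x
    have h3 : star x ⬝ᵥ A *ᵥ x + star x ⬝ᵥ B *ᵥ x = 0 := by
      rw [← dotProduct_add, ← add_mulVec, h, zero_mulVec, dotProduct_zero]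
    linarith [h1, h2, h3]
  ext i j
  have := congrFun (hmv (Pi.single j 1)) i
  simpa [mulVec_single] using this

theorem stmt6 {n p q : ℕ}
    (Abar Cbar Qbar Z : Matrix (Fin n) (Fin n) ℝ)
    (U : Matrix (Fin n) (Fin p ⊕ Fin q) ℝ)
    (Z₂ : Matrix (Fin q) (Fin q) ℝ)
    (A11 : Matrix (Fin p) (Fin p) ℝ) (A12 : Matrix (Fin p) (Fin q) ℝ)
    (A21 : Matrix (Fin q) (Fin p) ℝ) (A22 : Matrix (Fin q) (Fin q) ℝ)
    (C11 : Matrix (Fin p) (Fin p) ℝ) (C12 : Matrix (Fin p) (Fin q) ℝ)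
    (C21 : Matrix (Fin q) (Fin p) ℝ) (C22 : Matrix (Fin q) (Fin q) ℝ)
    (Q11 : Matrix (Fin p) (Fin p) ℝ) (Q12 : Matrix (Fin p) (Fin q) ℝ)
    (Q22 : Matrix (Fin q) (Fin q) ℝ)
    (hZ : Z.PosSemidef) (hQbar : Qbar.PosSemidef)
    (hLyap : Abarᵀ * Z + Z * Abar + Cbarᵀ * Z * Cbar + Qbar = 0)
    (hU1 : U * Uᵀ = 1) (hU2 : Uᵀ * U = 1)
    (hZblk : Uᵀ * Z * U = Matrix.fromBlocks 0 0 0 Z₂) (hZ₂ : Z₂.PosDef)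
    (hAblk : Uᵀ * Abar * U = Matrix.fromBlocks A11 A12 A21 A22)
    (hCblk : Uᵀ * Cbar * U = Matrix.fromBlocks C11 C12 C21 C22)
    (hQblk : Uᵀ * Qbar * U = Matrix.fromBlocks Q11 Q12 Q12ᵀ Q22) :
    Q11 = 0 ∧ Q12 = 0 ∧ C21 = 0 ∧ A21 = 0 ∧ Q22.PosSemidef ∧
    A22ᵀ * Z₂ + Z₂ * A22 + C22ᵀ * Z₂ * C22 + Q22 = 0 := by
  have ins : ∀ (X Y : Matrix (Fin n) (Fin n) ℝ),
      Uᵀ * (X * Y) * U = (Uᵀ * X * U) * (Uᵀ * Y * U) := by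
    intro X Y
    have : (Uᵀ * X * U) * (Uᵀ * Y * U) = Uᵀ * X * ((U * Uᵀ) * (Y * U)) := by
      simp only [Matrix.mul_assoc]
    rw [this, hU1, Matrix.one_mul, ← Matrix.mul_assoc, ← Matrix.mul_assoc,
      Matrix.mul_assoc Uᵀ X Y]
  have hAT : Uᵀ * Abarᵀ * U = (Matrix.fromBlocks A11 A12 A21 A22)ᵀ := by
    rw [← hAblk, transpose_mul, transpose_mul, transpose_transpose, Matrix.mul_assoc]
  have hCT : Uᵀ * Cbarᵀ * U = (Matrix.fromBlocks C11 C12 C21 C22)ᵀ := by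
    rw [← hCblk, transpose_mul, transpose_mul, transpose_transpose, Matrix.mul_assoc]
  have key : (Matrix.fromBlocks A11 A12 A21 A22)ᵀ * Matrix.fromBlocks 0 0 0 Z₂
      + Matrix.fromBlocks 0 0 0 Z₂ * Matrix.fromBlocks A11 A12 A21 A22
      + (Matrix.fromBlocks C11 C12 C21 C22)ᵀ * Matrix.fromBlocks 0 0 0 Z₂
          * Matrix.fromBlocks C11 C12 C21 C22
      + Matrix.fromBlocks Q11 Q12 Q12ᵀ Q22 = 0 := by
    have h0 : Uᵀ * (Abarᵀ * Z + Z * Abar + Cbarᵀ * Z * Cbar + Qbar) * U = 0 := by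
      rw [hLyap]; simp
    rw [Matrix.mul_add, Matrix.mul_add, Matrix.mul_add, Matrix.add_mul,
      Matrix.add_mul, Matrix.add_mul, ins Abarᵀ Z, ins Z Abar,
      ins (Cbarᵀ * Z) Cbar, ins Cbarᵀ Z, hAT, hCT, hZblk, hAblk, hCblk, hQblk] at h0
    exact h0
  simp only [fromBlocks_transpose, fromBlocks_multiply, fromBlocks_add,
    Matrix.mul_zero, Matrix.zero_mul, add_zero, zero_add, ← fromBlocks_zero,
    fromBlocks_inj] at key
  obtain ⟨e11, e12, e21, e22⟩ := key
  -- conjugated Qbar is psd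
  have hQb : (Matrix.fromBlocks Q11 Q12 Q12ᵀ Q22).PosSemidef := by
    have h := hQbar.conjTranspose_mul_mul_same U
    have hUH : Uᴴ = Uᵀ := by ext i j; simp [conjTranspose_apply]
    rw [hUH, hQblk] at h
    exact h
  have hQ11psd : Q11.PosSemidef := by
    have h := hQb.submatrix Sum.inl
    have hs : (Matrix.fromBlocks Q11 Q12 Q12ᵀ Q22).submatrix Sum.inl Sum.inl = Q11 := by
      ext i j; simp
    rwa [hs] at h
  have hQ22psd : Q22.PosSemidef := by
    have h := hQb.submatrix Sum.inr
    have hs : (Matrix.fromBlocks Q11 Q12 Q12ᵀ Q22).submatrix Sum.inr Sum.inr = Q22 := by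
      ext i j; simp
    rwa [hs] at h
  have hCpsd : (C21ᵀ * Z₂ * C21).PosSemidef := by
    have h := hZ₂.posSemidef.conjTranspose_mul_mul_same C21
    have hCH : C21ᴴ = C21ᵀ := by ext i j; simp [conjTranspose_apply]
    rwa [hCH] at h
  have hC0 : C21ᵀ * Z₂ * C21 = 0 := psd_add_eq_zero hCpsd hQ11psd e11
  have hQ11 : Q11 = 0 := psd_add_eq_zero hQ11psd hCpsd (by rw [add_comm]; exact e11)
  have hC21 : C21 = 0 := by
    have hx : ∀ x : Fin p → ℝ, C21 *ᵥ x = 0 := by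
      intro x
      by_contra hne
      have h1 : 0 < (C21 *ᵥ x) ⬝ᵥ Z₂ *ᵥ (C21 *ᵥ x) := by
        have := hZ₂.dotProduct_mulVec_pos hne
        simpa using this
      have h2 : (C21 *ᵥ x) ⬝ᵥ Z₂ *ᵥ (C21 *ᵥ x) = x ⬝ᵥ (C21ᵀ * Z₂ * C21) *ᵥ x := by
        rw [← Matrix.mulVec_mulVec, ← Matrix.mulVec_mulVec, Matrix.dotProduct_mulVec x,
          Matrix.vecMul_transpose]
      rw [h2, hC0] at h1
      simp at h1
    ext i j
    have := congrFun (hx (Pi.single j 1)) i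
    simpa [mulVec_single] using this
  have hQ12 : Q12 = 0 := by
    ext i j
    have hv : (Matrix.fromBlocks Q11 Q12 Q12ᵀ Q22) *ᵥ (Sum.elim (Pi.single i 1) 0) = 0 := by
      rw [← hQb.dotProduct_mulVec_zero_iff]
      simp [fromBlocks_mulVec, dotProduct, Fintype.sum_sum_type, hQ11]
    have h := congrFun hv (Sum.inr j)
    simpa [fromBlocks_mulVec, mulVec_single] using h
  have hA21 : A21 = 0 := by
    have e12' : A21ᵀ * Z₂ = 0 := by
      have := e12
      rw [hC21, hQ12] at this
      simpa using this
    have hdet : IsUnit Z₂.det := (Matrix.isUnit_iff_isUnit_det _).mp hZ₂.isUnit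
    have hT : A21ᵀ = 0 := by
      have h := congrArg (fun M => M * Z₂⁻¹) e12'
      simpa [Matrix.mul_assoc, Matrix.mul_nonsing_inv _ hdet] using h
    have := congrArg Matrix.transpose hT
    simpa using this
  exact ⟨hQ11, hQ12, hC21, hA21, hQ22psd, e22⟩
end

section
/- Let P̂ be a symmetric matrix such that the block matrix [[A'P̂ + P̂A + C'P̂C + Q, P̂B + C'P̂D],[B'P̂ + D'P̂C, R + D'P̂D]] is positive semidefinite. Define Q_P̂ = A'P̂ + P̂A + C'P̂C + Q, L_P̂ = P̂B + C'P̂D, R_P̂ = R + D'P̂D. If Z is any symmetric positive semidefinite solution of the singular algebraic Riccati equation A'Z + ZA + C'ZC + Q_P̂ - (ZB + C'ZD + L_P̂)(R_P̂ + D'ZD)†(B'Z + D'ZC + L_P̂') = 0 together with the regular condition (I - (R_P̂ + D'ZD)(R_P̂ + D'ZD)†)(B'Z + D'ZC + L_P̂') = 0, then P = Z + P̂ satisfies the generalized algebraic Riccati equation A'P + PA + C'PC + Q - (PB + C'PD)(R + D'PD)†(B'P + D'PC) = 0, with (R + D'PD)(R + D'PD)†(B'P + D'PC) = B'P + D'PC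 and R + D'PD ≥ 0. -/
open Matrix

lemma psd_add {n : ℕ} {M N : Matrix (Fin n) (Fin n) ℝ}
    (hM : M.PosSemidef) (hN : N.PosSemidef) : (M + N).PosSemidef := by
  refine ⟨hM.1.add hN.1, fun x => ?_⟩
  have := add_nonneg (hM.2 x) (hN.2 x)
  exact (hM.add hN).2 x

theorem stmt9 {n m : ℕ}
    (A C Q Phat Z : Matrix (Fin n) (Fin n) ℝ)
    (B D : Matrix (Fin n) (Fin m) ℝ) (R : Matrix (Fin m) (Fin m) ℝ)
    (hQ : Q.IsSymm) (hR : R.IsSymm) (hPhat : Phat.IsSymm)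
    (hLMI : (Matrix.fromBlocks
        (Aᵀ * Phat + Phat * A + Cᵀ * Phat * C + Q) (Phat * B + Cᵀ * Phat * D)
        (Bᵀ * Phat + Dᵀ * Phat * C) (R + Dᵀ * Phat * D)).PosSemidef)
    (hZ : Z.PosSemidef)
    -- notation: Q_P̂, L_P̂, R_P̂
    (QP LP RP : _)
    (hQP : QP = Aᵀ * Phat + Phat * A + Cᵀ * Phat * C + Q)
    (hLP : LP = Phat * B + Cᵀ * Phat * D)
    (hRP : RP = R + Dᵀ * Phat * D)
    (W1 : Matrix (Fin m) (Fin m) ℝ)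
    (hW1 : IsMoorePenrose (RP + Dᵀ * Z * D) W1)
    (hSARE : Aᵀ * Z + Z * A + Cᵀ * Z * C + QP
        - (Z * B + Cᵀ * Z * D + LP) * W1 * (Bᵀ * Z + Dᵀ * Z * C + LPᵀ) = 0)
    (hregZ : (1 - (RP + Dᵀ * Z * D) * W1) * (Bᵀ * Z + Dᵀ * Z * C + LPᵀ) = 0)
    (P : Matrix (Fin n) (Fin n) ℝ) (hP : P = Z + Phat)
    (W2 : Matrix (Fin m) (Fin m) ℝ)
    (hW2 : IsMoorePenrose (R + Dᵀ * P * D) W2) :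
    Aᵀ * P + P * A + Cᵀ * P * C + Q
        - (P * B + Cᵀ * P * D) * W2 * (Bᵀ * P + Dᵀ * P * C) = 0 ∧
    (R + Dᵀ * P * D) * W2 * (Bᵀ * P + Dᵀ * P * C) = Bᵀ * P + Dᵀ * P * C ∧
    (R + Dᵀ * P * D).PosSemidef := by
  
  subst hQP hLP hRP hP
  have e1 : R + Dᵀ * (Z + Phat) * D = (R + Dᵀ * Phat * D) + Dᵀ * Z * D := by
    simp [Matrix.mul_add, Matrix.add_mul]; abel
  have hLPt : (Phat * B + Cᵀ * Phat * D)ᵀ = Bᵀ * Phat + Dᵀ * Phat * C := by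
    simp [transpose_mul, hPhat.eq, Matrix.mul_assoc]
  have e2 : Bᵀ * (Z + Phat) + Dᵀ * (Z + Phat) * C
      = Bᵀ * Z + Dᵀ * Z * C + (Phat * B + Cᵀ * Phat * D)ᵀ := by
    rw [hLPt]; simp [Matrix.mul_add, Matrix.add_mul]; abel
  have e3 : Aᵀ * (Z + Phat) + (Z + Phat) * A + Cᵀ * (Z + Phat) * C + Q
      = Aᵀ * Z + Z * A + Cᵀ * Z * C + (Aᵀ * Phat + Phat * A + Cᵀ * Phat * C + Q) := by
    simp [Matrix.mul_add, Matrix.add_mul]; abel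
  have e4 : (Z + Phat) * B + Cᵀ * (Z + Phat) * D
      = Z * B + Cᵀ * Z * D + (Phat * B + Cᵀ * Phat * D) := by
    simp [Matrix.mul_add, Matrix.add_mul]; abel
  have hW2' : IsMoorePenrose ((R + Dᵀ * Phat * D) + Dᵀ * Z * D) W2 := e1 ▸ hW2
  have hW21 : W2 = W1 := mp_unique hW2' hW1
  have h2 : ((R + Dᵀ * Phat * D) + Dᵀ * Z * D) * W1
      * (Bᵀ * Z + Dᵀ * Z * C + (Phat * B + Cᵀ * Phat * D)ᵀ)
      = Bᵀ * Z + Dᵀ * Z * C + (Phat * B + Cᵀ * Phat * D)ᵀ := by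
    have := hregZ
    rw [Matrix.sub_mul, Matrix.one_mul, sub_eq_zero] at this
    exact this.symm
  refine ⟨?_, ?_, ?_⟩
  · rw [e3, e4, e2, hW21, hSARE]
  · rw [e1, e2, hW21, h2]
  · rw [e1]
    refine psd_add ?_ (by simpa using hZ.conjTranspose_mul_mul_same D)
    have := hLMI.submatrix Sum.inr
    convert this using 2
    ext i j; rfl
end

section
/- Let F: [0,T] → symmetric n×n matrices satisfy the linear matrix differential equation -Ḟ(t) = Q + A'F(t) + F(t)A + C'F(t)C with F(T) = 0, where Q is positive semidefinite. Then F(t) is positive semidefinite for all t ∈ [0,T]. -/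
open Matrix

private lemma hdot_aux {n : ℕ} (G : Matrix (Fin n) (Fin n) ℝ) (y : Fin n → ℝ) :
    y ⬝ᵥ (G *ᵥ y) = ∑ i, ∑ j, y i * G i j * y j := by
  simp [dotProduct, Matrix.mulVec, Finset.mul_sum, mul_assoc]

private lemma contAt_sum {α : Type*} [TopologicalSpace α] {ι : Type*} (s : Finset ι)
    (f : ι → α → ℝ) (x : α) (h : ∀ i ∈ s, ContinuousAt (f i) x) :
    ContinuousAt (fun a => ∑ i ∈ s, f i a) x := by
  classical
  induction s using Finset.induction_on with
  | empty => simpa using (continuousAt_const : ContinuousAt (fun _ : α => (0:ℝ)) x)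
  | insert a s hni ih =>
    have h1 : ContinuousAt (f a) x := h a (Finset.mem_insert_self a s)
    have h2 := ih (fun i hi => h i (Finset.mem_insert_of_mem hi))
    have : ContinuousAt (fun b => f a b + ∑ i ∈ s, f i b) x := h1.add h2
    simpa [Finset.sum_insert hni] using this

private lemma psd_kernel {n : ℕ} (M : Matrix (Fin n) (Fin n) ℝ) (hsym : Mᵀ = M)
    (hpsd : ∀ y, 0 ≤ y ⬝ᵥ (M *ᵥ y)) (x : Fin n → ℝ) (hx : x ⬝ᵥ (M *ᵥ x) = 0) :
    M *ᵥ x = 0 := by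
  have key : ∀ y : Fin n → ℝ, y ⬝ᵥ (M *ᵥ x) = 0 := by
    intro y
    set a := y ⬝ᵥ (M *ᵥ y) with ha'
    set b := y ⬝ᵥ (M *ᵥ x) with hb'
    have hpair : x ⬝ᵥ (M *ᵥ y) = b := by
      have hMx : x ᵥ* M = M *ᵥ x := by
        nth_rewrite 1 [← hsym]
        rw [Matrix.vecMul_transpose]
      rw [hb', Matrix.dotProduct_mulVec x M y, hMx, dotProduct_comm,
        Matrix.dotProduct_mulVec y M x]
    have ha : 0 ≤ a := hpsd y
    have hquad : ∀ t : ℝ, 0 ≤ t^2*a + 2*t*b := by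
      intro t
      have h0 := hpsd (t • y + x)
      have expand : (t • y + x) ⬝ᵥ (M *ᵥ (t • y + x)) = t^2*a + 2*t*b := by
        rw [Matrix.mulVec_add, Matrix.mulVec_smul, dotProduct_add,
          add_dotProduct, add_dotProduct, smul_dotProduct,
          smul_dotProduct, dotProduct_smul, dotProduct_smul,
          hpair, hx]
        simp only [smul_eq_mul, ← ha', ← hb']
        ring
      linarith [expand ▸ h0]
    have h1 := hquad (-(b/(a+1)))
    have hden : (0:ℝ) < a + 1 := by linarith
    have h2 : 0 ≤ (b^2*a - 2*b^2*(a+1)) / (a+1)^2 := by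
      have : (-(b/(a+1)))^2*a + 2*(-(b/(a+1)))*b = (b^2*a - 2*b^2*(a+1)) / (a+1)^2 := by
        field_simp
        ring
      linarith [this ▸ h1]
    have h3 : 0 ≤ b^2*a - 2*b^2*(a+1) := by
      have := mul_nonneg h2 (le_of_lt (pow_pos hden 2))
      have h4 : (b^2*a - 2*b^2*(a+1)) / (a+1)^2 * (a+1)^2 = b^2*a - 2*b^2*(a+1) := by
        field_simp
      linarith [h4 ▸ this]
    nlinarith [sq_nonneg b]
  funext i
  have := key (Pi.single i 1)
  simpa [dotProduct, Pi.single_apply] using this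

private lemma abs_entry_le {n : ℕ} (x : Fin n → ℝ) (hx : x ⬝ᵥ x = 1) (i : Fin n) :
    |x i| ≤ 1 := by
  have h : x i * x i ≤ 1 := by
    have h1 : x i * x i ≤ ∑ j, x j * x j :=
      Finset.single_le_sum (f := fun j => x j * x j)
        (fun j _ => mul_self_nonneg (x j)) (Finset.mem_univ i)
    calc x i * x i ≤ ∑ j, x j * x j := h1
    _ = x ⬝ᵥ x := rfl
    _ = 1 := hx
  nlinarith [abs_nonneg (x i), sq_abs (x i), sq_nonneg (|x i| - 1)]

private lemma quad_bound {n : ℕ} (B : Matrix (Fin n) (Fin n) ℝ) (x : Fin n → ℝ)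
    (hx : x ⬝ᵥ x = 1) : |x ⬝ᵥ (B *ᵥ x)| ≤ ∑ i, ∑ j, |B i j| := by
  rw [hdot_aux]
  calc |∑ i, ∑ j, x i * B i j * x j| ≤ ∑ i, |∑ j, x i * B i j * x j| :=
        Finset.abs_sum_le_sum_abs _ _
    _ ≤ ∑ i, ∑ j, |x i * B i j * x j| :=
        Finset.sum_le_sum fun i _ => Finset.abs_sum_le_sum_abs _ _
    _ ≤ ∑ i, ∑ j, |B i j| := by
        apply Finset.sum_le_sum; intro i _
        apply Finset.sum_le_sum; intro j _
        rw [abs_mul, abs_mul]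
        have h1 := abs_entry_le x hx i
        have h2 := abs_entry_le x hx j
        have h3 := abs_nonneg (B i j)
        have h4 : |x i| * |B i j| ≤ |B i j| := mul_le_of_le_one_left h3 h1
        have h5 : |x i| * |B i j| * |x j| ≤ |x i| * |B i j| :=
          mul_le_of_le_one_right (mul_nonneg (abs_nonneg _) h3) h2
        linarith

private lemma mulvec_self_bound {n : ℕ} (C : Matrix (Fin n) (Fin n) ℝ) (x : Fin n → ℝ)
    (hx : x ⬝ᵥ x = 1) : (C *ᵥ x) ⬝ᵥ (C *ᵥ x) ≤ ∑ i, (∑ j, |C i j|)^2 := by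
  have : (C *ᵥ x) ⬝ᵥ (C *ᵥ x) = ∑ i, (∑ j, C i j * x j) * (∑ j, C i j * x j) := rfl
  rw [this]
  apply Finset.sum_le_sum
  intro i _
  have h1 : |∑ j, C i j * x j| ≤ ∑ j, |C i j| := by
    calc |∑ j, C i j * x j| ≤ ∑ j, |C i j * x j| := Finset.abs_sum_le_sum_abs _ _
      _ ≤ ∑ j, |C i j| := by
          apply Finset.sum_le_sum; intro j _
          rw [abs_mul]
          have := abs_entry_le x hx j
          nlinarith [abs_nonneg (C i j)]
  have h2 : 0 ≤ ∑ j, |C i j| := Finset.sum_nonneg fun j _ => abs_nonneg _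
  nlinarith [abs_nonneg (∑ j, C i j * x j), sq_abs (∑ j, C i j * x j)]

private lemma scale_ineq {n : ℕ} (G : Matrix (Fin n) (Fin n) ℝ) (r : ℝ)
    (h : ∀ u : Fin n → ℝ, u ⬝ᵥ u = 1 → 0 ≤ u ⬝ᵥ (G *ᵥ u) + r) (y : Fin n → ℝ) :
    0 ≤ y ⬝ᵥ (G *ᵥ y) + r * (y ⬝ᵥ y) := by
  rcases eq_or_ne y 0 with rfl | hy
  · simp
  · have h0 : 0 ≤ y ⬝ᵥ y := Finset.sum_nonneg fun i _ => mul_self_nonneg (y i)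
    have hpos : 0 < y ⬝ᵥ y :=
      lt_of_le_of_ne h0 (Ne.symm fun h' => hy (dotProduct_self_eq_zero.mp h'))
    set c := Real.sqrt (y ⬝ᵥ y) with hc
    have hc0 : 0 < c := Real.sqrt_pos.mpr hpos
    have hcc : c * c = y ⬝ᵥ y := Real.mul_self_sqrt h0
    have hu : (c⁻¹ • y) ⬝ᵥ (c⁻¹ • y) = 1 := by
      rw [smul_dotProduct, dotProduct_smul, smul_eq_mul, smul_eq_mul, ← hcc]
      field_simp
    have h2 := h _ hu
    rw [Matrix.mulVec_smul, smul_dotProduct, dotProduct_smul,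
      smul_eq_mul, smul_eq_mul] at h2
    have h3 : (c * c) * (c⁻¹ * (c⁻¹ * (y ⬝ᵥ (G *ᵥ y))) + r) =
        y ⬝ᵥ (G *ᵥ y) + r * (c * c) := by
      field_simp
    have h4 : 0 ≤ (c * c) * (c⁻¹ * (c⁻¹ * (y ⬝ᵥ (G *ᵥ y))) + r) :=
      mul_nonneg (mul_pos hc0 hc0).le h2
    rw [h3, hcc] at h4
    exact h4

theorem stmt11 {n : ℕ} (T : ℝ) (hT : 0 ≤ T)
    (A C Q : Matrix (Fin n) (Fin n) ℝ) (hQsymm : Q.IsSymm) (hQ : Q.PosSemidef)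
    (F : ℝ → Matrix (Fin n) (Fin n) ℝ)
    (hFsymm : ∀ t ∈ Set.Icc 0 T, (F t).IsSymm)
    (hode : ∀ t ∈ Set.Icc 0 T, ∀ i j,
      HasDerivAt (fun s => F s i j)
        (-(Q + Aᵀ * F t + F t * A + Cᵀ * F t * C) i j) t)
    (hterm : F T = 0) :
    ∀ t ∈ Set.Icc 0 T, (F t).PosSemidef := by
  classical
  set cA := ∑ i, ∑ j, |A i j| with hcA
  set cC := ∑ i, (∑ j, |C i j|)^2 with hcC
  have hcA0 : 0 ≤ cA := Finset.sum_nonneg fun i _ => Finset.sum_nonneg fun j _ => abs_nonneg _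
  have hcC0 : 0 ≤ cC := Finset.sum_nonneg fun i _ => sq_nonneg _
  set L := 2*cA + cC + 1 with hL
  have hFc : ∀ i j, ∀ t ∈ Set.Icc (0:ℝ) T, ContinuousAt (fun s => F s i j) t :=
    fun i j t ht => (hode t ht i j).continuousAt
  set S : Set (Fin n → ℝ) := {x | x ⬝ᵥ x = 1} with hSdef
  have hdotcont : Continuous fun x : Fin n → ℝ => x ⬝ᵥ x := by
    have : (fun x : Fin n → ℝ => x ⬝ᵥ x) = fun x => ∑ i, x i * x i := rfl
    rw [this]
    exact continuous_finset_sum _ fun i _ => (continuous_apply i).mul (continuous_apply i)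
  have hSclosed : IsClosed S := isClosed_eq hdotcont continuous_const
  have hScompact : IsCompact S := by
    apply (isCompact_closedBall (0 : Fin n → ℝ) 1).of_isClosed_subset hSclosed
    intro x hx
    simp only [Metric.mem_closedBall, dist_zero_right]
    apply pi_norm_le_iff_of_nonneg (by norm_num) |>.mpr
    intro i
    simpa using abs_entry_le x hx i
  -- key perturbation claim
  have key : ∀ ε : ℝ, 0 < ε → ∀ t ∈ Set.Icc 0 T, ∀ x ∈ S,
      0 ≤ x ⬝ᵥ (F t *ᵥ x) + ε * Real.exp (L * (T - t)) := by
    intro ε hε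
    by_contra hbad
    push_neg at hbad
    obtain ⟨t₀, ht₀, x₀, hx₀S, hq₀⟩ := hbad
    set q : ℝ → (Fin n → ℝ) → ℝ :=
      fun t y => y ⬝ᵥ (F t *ᵥ y) + ε * Real.exp (L * (T - t)) with hq
    have hqderiv : ∀ y : Fin n → ℝ, ∀ t ∈ Set.Icc (0:ℝ) T,
        HasDerivAt (fun s => q s y)
          (-(y ⬝ᵥ ((Q + Aᵀ * F t + F t * A + Cᵀ * F t * C) *ᵥ y))
            + ε * (Real.exp (L * (T - t)) * (-L))) t := by
      intro y t ht
      have hsum : HasDerivAt (fun s => ∑ i, ∑ j, y i * F s i j * y j)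
          (∑ i, ∑ j, y i * (-((Q + Aᵀ * F t + F t * A + Cᵀ * F t * C) i j)) * y j) t := by
        apply HasDerivAt.fun_sum; intro i _
        apply HasDerivAt.fun_sum; intro j _
        exact ((hode t ht i j).const_mul (y i)).mul_const (y j)
      have hexp : HasDerivAt (fun s => ε * Real.exp (L * (T - s)))
          (ε * (Real.exp (L * (T - t)) * (-L))) t := by
        have hin : HasDerivAt (fun s : ℝ => L * (T - s)) (L * (-1)) t :=
          ((hasDerivAt_id t).const_sub T).const_mul L
        have h2 := HasDerivAt.const_mul ε hin.exp
        exact h2.congr_deriv (by ring)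
      have hfun : (fun s => q s y) =
          fun s => (∑ i, ∑ j, y i * F s i j * y j) + ε * Real.exp (L * (T - s)) := by
        funext s
        simp only [hq]
        rw [hdot_aux]
      rw [hfun]
      have h3 := hsum.add hexp
      refine h3.congr_deriv ?_
      rw [hdot_aux]
      rw [← Finset.sum_neg_distrib]
      congr 1
      apply Finset.sum_congr rfl; intro i _
      rw [← Finset.sum_neg_distrib]
      apply Finset.sum_congr rfl; intro j _
      ring
    -- continuity of q on the product
    have hqcont : ContinuousOn (fun p : ℝ × (Fin n → ℝ) => q p.1 p.2)
        (Set.Icc (0:ℝ) T ×ˢ S) := by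
      intro p hp
      apply ContinuousAt.continuousWithinAt
      have hp1 : p.1 ∈ Set.Icc (0:ℝ) T := hp.1
      have hsumc : ContinuousAt (fun p : ℝ × (Fin n → ℝ) =>
          ∑ i, ∑ j, p.2 i * F p.1 i j * p.2 j) p := by
        apply contAt_sum; intro i _
        apply contAt_sum; intro j _
        have h1 : ContinuousAt (fun p : ℝ × (Fin n → ℝ) => p.2 i) p :=
          (continuous_apply i).continuousAt.comp continuous_snd.continuousAt
        have h2 : ContinuousAt (fun p : ℝ × (Fin n → ℝ) => F p.1 i j) p :=
          (hFc i j p.1 hp1).comp continuous_fst.continuousAt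
        have h3 : ContinuousAt (fun p : ℝ × (Fin n → ℝ) => p.2 j) p :=
          (continuous_apply j).continuousAt.comp continuous_snd.continuousAt
        exact (h1.mul h2).mul h3
      have hexpc : ContinuousAt (fun p : ℝ × (Fin n → ℝ) =>
          ε * Real.exp (L * (T - p.1))) p := by
        exact continuousAt_const.mul (Real.continuous_exp.comp
          (continuous_const.mul (continuous_const.sub continuous_fst))).continuousAt
      have := hsumc.add hexpc
      have heq : (fun p : ℝ × (Fin n → ℝ) => q p.1 p.2) =
          fun p => (∑ i, ∑ j, p.2 i * F p.1 i j * p.2 j) + ε * Real.exp (L * (T - p.1)) := by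
        funext p
        simp only [hq]
        rw [hdot_aux]
      rw [heq]
      exact this
    -- compact bad set
    set K : Set (ℝ × (Fin n → ℝ)) :=
      (Set.Icc (0:ℝ) T ×ˢ S) ∩ ((fun p : ℝ × (Fin n → ℝ) => q p.1 p.2) ⁻¹' Set.Iic 0)
      with hKdef
    have hKclosed : IsClosed K :=
      hqcont.preimage_isClosed_of_isClosed (isClosed_Icc.prod hSclosed) isClosed_Iic
    have hKcompact : IsCompact K :=
      (isCompact_Icc.prod hScompact).of_isClosed_subset hKclosed Set.inter_subset_left
    set B : Set ℝ := Prod.fst '' K with hBdef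
    have hBcompact : IsCompact B := hKcompact.image continuous_fst
    have hBne : B.Nonempty := by
      refine ⟨t₀, ⟨(t₀, x₀), ⟨⟨ht₀, hx₀S⟩, ?_⟩, rfl⟩⟩
      show q t₀ x₀ ≤ 0
      exact hq₀.le
    obtain ⟨⟨t₁, x⟩, hmemK, hfst⟩ := hBcompact.sSup_mem hBne
    have hfst' : t₁ = sSup B := hfst
    obtain ⟨⟨htsIcc, hxS⟩, hqle⟩ := hmemK
    have htsIcc : t₁ ∈ Set.Icc (0:ℝ) T := htsIcc
    have hxS : x ∈ S := hxS
    have hqle : q t₁ x ≤ 0 := hqle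
    have hxx : x ⬝ᵥ x = 1 := hxS
    have htsT : t₁ < T := by
      rcases lt_or_eq_of_le htsIcc.2 with h | h
      · exact h
      · exfalso
        rw [h] at hqle
        simp only [hq] at hqle
        rw [hterm] at hqle
        simp at hqle
        linarith
    have hBle : ∀ s ∈ B, s ≤ t₁ := fun s hs => hfst' ▸ le_csSup hBcompact.bddAbove hs
    have hpos : ∀ s ∈ Set.Ioc t₁ T, ∀ y ∈ S, 0 < q s y := by
      intro s hs y hy
      by_contra h
      push_neg at h
      have hsB : s ∈ B := ⟨(s, y),
        ⟨⟨⟨le_trans htsIcc.1 hs.1.le, hs.2⟩, hy⟩, h⟩, rfl⟩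
      exact absurd (hBle s hsB) (not_le.mpr hs.1)
    have hunit : ∀ u ∈ S, 0 ≤ q t₁ u := by
      intro u hu
      have hcontq : ContinuousAt (fun s => q s u) t₁ := (hqderiv u t₁ htsIcc).continuousAt
      have htd : Filter.Tendsto (fun s => q s u) (nhdsWithin t₁ (Set.Ioi t₁))
          (nhds (q t₁ u)) := hcontq.tendsto.mono_left nhdsWithin_le_nhds
      have hev : ∀ᶠ s in nhdsWithin t₁ (Set.Ioi t₁), 0 ≤ q s u := by
        filter_upwards [Ioc_mem_nhdsGT htsT] with s hs
        exact (hpos s hs u hu).le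
      exact ge_of_tendsto htd hev
    have hq0 : q t₁ x = 0 := le_antisymm hqle (hunit x hxS)
    set e := Real.exp (L * (T - t₁)) with he
    have he0 : 0 < e := Real.exp_pos _
    have hGpsd : ∀ y : Fin n → ℝ,
        0 ≤ y ⬝ᵥ (F t₁ *ᵥ y) + (ε * e) * (y ⬝ᵥ y) := by
      intro y
      apply scale_ineq
      intro u hu
      have h := hunit u hu
      simp only [hq] at h
      rw [← he] at h
      linarith
    -- the kernel direction
    set P : Matrix (Fin n) (Fin n) ℝ := F t₁ + (ε*e) • (1 : Matrix (Fin n) (Fin n) ℝ)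
      with hP
    have hPmv : ∀ y, P *ᵥ y = F t₁ *ᵥ y + (ε*e) • y := by
      intro y
      rw [hP, Matrix.add_mulVec, Matrix.smul_mulVec, Matrix.one_mulVec]
    have hPdot : ∀ y, y ⬝ᵥ (P *ᵥ y) = y ⬝ᵥ (F t₁ *ᵥ y) + (ε*e) * (y ⬝ᵥ y) := by
      intro y
      rw [hPmv, dotProduct_add, dotProduct_smul, smul_eq_mul]
    have hPsymm : Pᵀ = P := by
      rw [hP, Matrix.transpose_add, Matrix.transpose_smul, Matrix.transpose_one,
        (hFsymm t₁ htsIcc).eq]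
    have hq0' : x ⬝ᵥ (F t₁ *ᵥ x) + ε * e = 0 := by
      have := hq0
      simp only [hq] at this
      rw [← he] at this
      exact this
    have hPx : P *ᵥ x = 0 := by
      apply psd_kernel P hPsymm (fun y => by rw [hPdot]; exact hGpsd y) x
      rw [hPdot, hxx, mul_one]
      linarith
    have hFx : F t₁ *ᵥ x = (-(ε*e)) • x := by
      have h1 : F t₁ *ᵥ x + (ε*e) • x = 0 := by rw [← hPmv x, hPx]
      have := eq_neg_of_add_eq_zero_left h1
      rw [this, neg_smul]
    -- bounds
    have haA : |x ⬝ᵥ (A *ᵥ x)| ≤ cA := quad_bound A x hxx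
    have hwC : (C *ᵥ x) ⬝ᵥ (C *ᵥ x) ≤ cC := mulvec_self_bound C x hxx
    -- derivative at t₁
    have hderiv : HasDerivAt (fun s => q s x)
        (-(x ⬝ᵥ ((Q + Aᵀ * F t₁ + F t₁ * A + Cᵀ * F t₁ * C) *ᵥ x))
          + ε * (e * (-L))) t₁ := by
      have := hqderiv x t₁ htsIcc
      rw [← he] at this
      exact this
    set D := -(x ⬝ᵥ ((Q + Aᵀ * F t₁ + F t₁ * A + Cᵀ * F t₁ * C) *ᵥ x))
          + ε * (e * (-L)) with hD
    have hεe : 0 < ε * e := mul_pos hε he0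
    have hsplit : x ⬝ᵥ ((Q + Aᵀ * F t₁ + F t₁ * A + Cᵀ * F t₁ * C) *ᵥ x)
        = x ⬝ᵥ (Q *ᵥ x) + (-(ε*e)) * (x ⬝ᵥ (A *ᵥ x)) + (-(ε*e)) * (x ⬝ᵥ (A *ᵥ x))
          + (C *ᵥ x) ⬝ᵥ (F t₁ *ᵥ (C *ᵥ x)) := by
      rw [Matrix.add_mulVec, Matrix.add_mulVec, Matrix.add_mulVec,
        dotProduct_add, dotProduct_add, dotProduct_add]
      congr 1
      congr 1
      congr 1
      · -- Aᵀ * F t₁ term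
        rw [← Matrix.mulVec_mulVec, hFx, Matrix.mulVec_smul, dotProduct_smul,
          smul_eq_mul]
        congr 1
        rw [Matrix.dotProduct_mulVec, Matrix.vecMul_transpose, dotProduct_comm]
      · -- F t₁ * A term
        rw [← Matrix.mulVec_mulVec, Matrix.dotProduct_mulVec]
        nth_rewrite 1 [← (hFsymm t₁ htsIcc).eq]
        rw [Matrix.vecMul_transpose, hFx, smul_dotProduct, smul_eq_mul]
      · -- Cᵀ * F t₁ * C term
        rw [← Matrix.mulVec_mulVec, ← Matrix.mulVec_mulVec,
          Matrix.dotProduct_mulVec, Matrix.vecMul_transpose]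
    have hQx : 0 ≤ x ⬝ᵥ (Q *ᵥ x) := by
      have := hQ.dotProduct_mulVec_nonneg x
      simpa using this
    have hCx : -(ε*e) * ((C *ᵥ x) ⬝ᵥ (C *ᵥ x)) ≤ (C *ᵥ x) ⬝ᵥ (F t₁ *ᵥ (C *ᵥ x)) := by
      have := hGpsd (C *ᵥ x)
      linarith
    have h1 : ε*e*(x ⬝ᵥ (A *ᵥ x)) ≤ ε*e*cA :=
      mul_le_mul_of_nonneg_left (le_trans (le_abs_self _) haA) hεe.le
    have h2 : ε*e*((C *ᵥ x) ⬝ᵥ (C *ᵥ x)) ≤ ε*e*cC :=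
      mul_le_mul_of_nonneg_left hwC hεe.le
    have hexpand : D = -(x ⬝ᵥ (Q *ᵥ x)) + 2*(ε*e)*(x ⬝ᵥ (A *ᵥ x))
        - ((C *ᵥ x) ⬝ᵥ (F t₁ *ᵥ (C *ᵥ x))) - ε*e*(2*cA+cC+1) := by
      rw [hD, hsplit, hL]
      ring
    have hDneg : D < 0 := by
      rw [hexpand]
      nlinarith [h1, h2, hQx, hCx, hεe]
    -- slope contradiction
    rw [hasDerivAt_iff_tendsto_slope] at hderiv
    have hmono : nhdsWithin t₁ (Set.Ioi t₁) ≤ nhdsWithin t₁ {t₁}ᶜ :=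
      nhdsWithin_mono t₁ (fun s hs => Set.mem_compl_singleton_iff.mpr (ne_of_gt hs))
    have hslope := (hderiv.mono_left hmono).eventually_lt_const hDneg
    have hIoc : Set.Ioc t₁ T ∈ nhdsWithin t₁ (Set.Ioi t₁) :=
      Ioc_mem_nhdsGT htsT
    have hex : ∃ s, slope (fun s => q s x) t₁ s < 0 ∧ s ∈ Set.Ioc t₁ T :=
      (hslope.and (Filter.eventually_of_mem hIoc fun s hs => hs)).exists
    obtain ⟨s, hs1, hs2⟩ := hex
    have hqs : q s x < 0 := by
      rw [slope_def_field, hq0] at hs1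
      have hpos' : 0 < s - t₁ := sub_pos.mpr hs2.1
      rcases div_neg_iff.mp hs1 with ⟨_, h⟩ | ⟨h, _⟩
      · linarith
      · linarith
    exact absurd (hpos s hs2 x hxS) (not_lt.mpr hqs.le)
  -- conclude
  intro t ht
  rw [Matrix.posSemidef_iff_dotProduct_mulVec]
  refine ⟨hFsymm t ht, ?_⟩
  intro x
  have hv : 0 ≤ x ⬝ᵥ (F t *ᵥ x) := by
    have key2 : ∀ ε : ℝ, 0 < ε →
        0 ≤ x ⬝ᵥ (F t *ᵥ x) + (ε * Real.exp (L * (T - t))) * (x ⬝ᵥ x) := by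
      intro ε hε
      apply scale_ineq
      intro u hu
      exact key ε hε t ht u hu
    set v := x ⬝ᵥ (F t *ᵥ x) with hvdef
    set w := Real.exp (L * (T - t)) * (x ⬝ᵥ x) with hw
    have hall : ∀ ε : ℝ, 0 < ε → 0 ≤ v + ε * w := by
      intro ε hε
      have := key2 ε hε
      have heq : (ε * Real.exp (L * (T - t))) * (x ⬝ᵥ x) = ε * w := by rw [hw]; ring
      linarith [heq ▸ this]
    by_contra hneg
    push_neg at hneg
    have hx0 : 0 ≤ x ⬝ᵥ x := Finset.sum_nonneg fun i _ => mul_self_nonneg (x i)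
    have hw0 : 0 ≤ w := mul_nonneg (Real.exp_pos _).le hx0
    have hεp : 0 < -v / (w + 1) := div_pos (neg_pos.mpr hneg) (by linarith)
    have h5 := hall _ hεp
    have hkey : (v + (-v / (w + 1)) * w) * (w + 1) = v := by
      field_simp
      ring
    have h6 : 0 ≤ (v + (-v / (w + 1)) * w) * (w + 1) :=
      mul_nonneg h5 (by linarith)
    rw [hkey] at h6
    linarith
  simpa using hv
end
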